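/- (Expanded shifted symplectic product matrix) Let H(D) = [Z(D)|X(D)] be an (n−k)×2n matrix of Laurent polynomials over F_2 with shifted symplectic product matrix Ω(D) = Z(D)X^T(D^{-1}) + X(D)Z^T(D^{-1}). For the l-expanded check matrix H_l(D) = ⌊R_l(D^{1/l}) H(D^{1/l}) C_l(D^{1/l})⌋, the shifted symplectic product matrix satisfies Ω_l(D) = ⌊R_l(D^{1/l}) Ω(D^{1/l}) R_l^T(D^{-1/l})⌋. -/

import Mathlib

open Matrix LaurentPolynomial

/-- Laurent polynomials over `F₂` in the fractional variable `t = D^{1/l}`: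
a Laurent polynomial `h(D)` evaluated at `D^{1/l}` is the same coefficient data,
reinterpreted in `F₂[t, t⁻¹]`. -/
abbrev L2 := LaurentPolynomial (ZMod 2)

/-- Time reversal: substitution of `t⁻¹` for `t` (i.e. `D^{-1/l}` for `D^{1/l}`). -/
noncomputable def rev (f : L2) : L2 := LaurentPolynomial.invert f

/-- The flooring operation `⌊·⌋`: null the coefficients of all fractional powers of `D`,
keeping only the monomials `t^m` with `l ∣ m`. -/
noncomputable def fl (l : ℕ) (f : L2) : L2 :=
  AddMonoidAlgebra.ofCoeff (Finsupp.filter (fun m : ℤ => (l : ℤ) ∣ m) f.coeff)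

/-- The matrix `R_l(D^{1/l})`: the block column `[D⁰·I; D^{1/l}·I; …; D^{(l-1)/l}·I]`
with `m × m` identity blocks, written in the variable `t = D^{1/l}`. -/
noncomputable def Rl (l m : ℕ) : Matrix (Fin l × Fin m) (Fin m) L2 :=
  Matrix.of fun p r => if p.2 = r then T ((p.1 : ℤ)) else 0

/-- The matrix `C'_l(D^{1/l}) = [D⁰·I, D^{-1/l}·I, …, D^{-(l-1)/l}·I]` with `n × n`
identity blocks, written in the variable `t = D^{1/l}`. -/
noncomputable def Cl' (l n : ℕ) : Matrix (Fin n) (Fin l × Fin n) L2 :=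
  Matrix.of fun c q => if c = q.2 then T (-(q.1 : ℤ)) else 0

/-- The shifted symplectic product matrix of a check matrix with `Z`-part `Z` and
`X`-part `X`: `Ω = Z Xᵀ(D⁻¹) + X Zᵀ(D⁻¹)` (here written in the variable `D^{1/l}`). -/
noncomputable def sspMatrix {α β : Type} [Fintype β]
    (Z X : Matrix α β L2) : Matrix α α L2 :=
  Z * (X.map rev)ᵀ + X * (Z.map rev)ᵀ

/- ### Auxiliary lemmas -/

lemma fl_add (l : ℕ) (f g : L2) : fl l (f + g) = fl l f + fl l g := by
  simp only [fl, AddMonoidAlgebra.coeff_add, Finsupp.filter_add, AddMonoidAlgebra.ofCoeff_add]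

lemma fl_zero (l : ℕ) : fl l 0 = 0 := by simp [fl, Finsupp.filter_zero]

lemma fl_apply (l : ℕ) (f : L2) (a : ℤ) :
    (fl l f).coeff a = if (l : ℤ) ∣ a then f.coeff a else 0 := by
  simp [fl, Finsupp.filter_apply]

lemma rev_fl (l : ℕ) (f : L2) : rev (fl l f) = fl l (rev f) := by
  ext a
  simp only [rev, invert_apply, fl_apply, dvd_neg]

lemma rev_mul (f g : L2) : rev (f * g) = rev f * rev g := map_mul invert f g

lemma fl_C_T (l : ℕ) (r : ZMod 2) (c : ℤ) :
    fl l (C r * T c) = if (l : ℤ) ∣ c then C r * T c else 0 := by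
  rw [← single_eq_C_mul_T, fl, AddMonoidAlgebra.coeff_single]
  split_ifs with h
  · rw [Finsupp.filter_single_of_pos _ h, AddMonoidAlgebra.ofCoeff_single, single_eq_C_mul_T]
  · rw [Finsupp.filter_single_of_neg _ h]; rfl

lemma T_mul_C_T (c : ℤ) (r : ZMod 2) (a : ℤ) :
    T c * (C r * T a) = C r * T (c + a) := by
  rw [T_add]; ring

/-- The key convolution identity for the flooring operation. -/
lemma key (l : ℕ) (hl : 0 < l) (u v : ℤ) (f g : L2) :
    ∑ j : Fin l, fl l (T (u - (j : ℤ)) * f) * fl l (T (v + (j : ℤ)) * g)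
      = fl l (T (u + v) * (f * g)) := by
  induction f using AddMonoidAlgebra.induction_linear with
  | zero => simp [fl_zero]
  | add f₁ f₂ h₁ h₂ =>
      simp only [mul_add, add_mul, fl_add, Finset.sum_add_distrib, h₁, h₂]
  | single a r =>
    induction g using AddMonoidAlgebra.induction_linear with
    | zero => simp [fl_zero]
    | add g₁ g₂ h₁ h₂ =>
        simp only [mul_add, fl_add, mul_add, Finset.sum_add_distrib, h₁, h₂]
    | single b s =>
      have hl' : (0 : ℤ) < (l : ℤ) := by exact_mod_cast hl
      simp only [single_eq_C_mul_T, T_mul_C_T]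
      -- reduce the RHS product
      have hrhs : C r * T a * (C s * T b) = C (r * s) * T (a + b) := by
        rw [_root_.map_mul, T_add]; ring
      rw [hrhs, T_mul_C_T, fl_C_T]
      -- the unique surviving index
      have h0 : 0 ≤ (u + a) % (l : ℤ) := Int.emod_nonneg _ (by omega)
      have h1 : (u + a) % (l : ℤ) < (l : ℤ) := Int.emod_lt_of_pos _ hl'
      set j0 : Fin l := ⟨((u + a) % (l : ℤ)).toNat, by omega⟩ with hj0
      have hj0z : (j0 : ℤ) = (u + a) % (l : ℤ) := by
        simp [hj0]; omega
      have hdvd0 : (l : ℤ) ∣ u - (j0 : ℤ) + a := by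
        rw [hj0z]
        have := Int.emod_emod_of_dvd (u + a) (dvd_refl (l : ℤ))
        have : (l : ℤ) ∣ (u + a) - (u + a) % (l : ℤ) :=
          Int.dvd_self_sub_of_emod_eq rfl
        convert this using 1; ring
      rw [Finset.sum_eq_single j0]
      · rw [fl_C_T, fl_C_T, if_pos hdvd0]
        have hiff : (l : ℤ) ∣ v + (j0 : ℤ) + b ↔ (l : ℤ) ∣ u + v + (a + b) := by
          constructor
          · intro h
            have := dvd_add hdvd0 h
            convert this using 1; rfl; ring
          · intro h
            have := dvd_sub h hdvd0
            convert this using 1; rfl; ring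
        split_ifs with h2 h3 h3
        · rw [← single_eq_C_mul_T, ← single_eq_C_mul_T, ← single_eq_C_mul_T,
            AddMonoidAlgebra.single_mul_single]
          congr 1
          ring
        · exact absurd (hiff.mp h2) h3
        · exact absurd (hiff.mpr h3) h2
        · simp
      · intro j _ hj
        rw [fl_C_T]
        have : ¬ (l : ℤ) ∣ u - (j : ℤ) + a := by
          intro h
          have hd : (l : ℤ) ∣ (j0 : ℤ) - (j : ℤ) := by
            have := dvd_sub h hdvd0
            convert this using 1; rfl; ring
          have hj0lt : ((j0 : ℕ) : ℤ) < (l : ℤ) := by exact_mod_cast j0.2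
          have hjlt : ((j : ℕ) : ℤ) < (l : ℤ) := by exact_mod_cast j.2
          have : ((j0 : ℕ) : ℤ) - (j : ℤ) = 0 := by
            refine Int.eq_zero_of_abs_lt_dvd hd ?_
            rw [abs_lt]; constructor <;> omega
          apply hj
          have : (j : ℤ) = (j0 : ℤ) := by omega
          exact Fin.ext (by exact_mod_cast this)
        rw [if_neg this, zero_mul]
      · intro h
        exact absurd (Finset.mem_univ j0) h

lemma fl_sum {ι : Type*} (l : ℕ) (s : Finset ι) (f : ι → L2) :
    fl l (∑ i ∈ s, f i) = ∑ i ∈ s, fl l (f i) := by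
  classical
  induction s using Finset.induction_on with
  | empty => simp [fl_zero]
  | insert _ _ h ih => simp [Finset.sum_insert h, fl_add, ih]

/-- Entry of the shifted symplectic product matrix. -/
lemma ssp_apply {α β : Type} [Fintype β] (Z X : Matrix α β L2) (p q : α) :
    sspMatrix Z X p q
      = (∑ w : β, Z p w * rev (X q w)) + ∑ w : β, X p w * rev (Z q w) := by
  simp [sspMatrix, Matrix.add_apply, Matrix.mul_apply]

/-- Entry of `Rl * A * Cl'`. -/
lemma RAC_apply {l m n : ℕ} (A : Matrix (Fin m) (Fin n) L2)
    (p : Fin l × Fin m) (q : Fin l × Fin n) :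
    (Rl l m * A * Cl' l n) p q = T ((p.1 : ℤ) - (q.1 : ℤ)) * A p.2 q.2 := by
  simp only [Matrix.mul_apply, Rl, Cl', Matrix.of_apply, ite_mul, zero_mul,
    mul_ite, mul_zero, Finset.sum_ite_eq, Finset.sum_ite_eq', Finset.mem_univ,
    if_true]
  rw [sub_eq_add_neg, T_add]
  ring

/-- Entry of `Rl * A * (Rl.map rev)ᵀ`. -/
lemma RAR_apply {l m : ℕ} (A : Matrix (Fin m) (Fin m) L2)
    (p q : Fin l × Fin m) :
    (Rl l m * A * ((Rl l m).map rev)ᵀ) p q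
      = T ((p.1 : ℤ) - (q.1 : ℤ)) * A p.2 q.2 := by
  have hrev0 : rev (0 : L2) = 0 := map_zero invert
  simp only [Matrix.mul_apply, Rl, Matrix.of_apply, Matrix.transpose_apply,
    Matrix.map_apply, ite_mul, zero_mul, mul_ite, mul_zero,
    apply_ite rev, hrev0, Finset.sum_ite_eq, Finset.sum_ite_eq', Finset.mem_univ, if_true]
  have : rev (T ((q.1 : ℤ)) : L2) = T (-(q.1 : ℤ)) := invert_T _
  rw [this, sub_eq_add_neg, T_add]
  ring

/-- Expanded shifted symplectic product matrix: if `H(D) = [Z(D) | X(D)]` has shifted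
symplectic product matrix `Ω(D)`, then the `l`-expanded check matrix
`H_l(D) = ⌊R_l(D^{1/l}) H(D^{1/l}) C_l(D^{1/l})⌋`, whose `Z`- and `X`-parts are
`Z_l = ⌊R_l Z C'_l⌋` and `X_l = ⌊R_l X C'_l⌋`, has shifted symplectic product matrix
`Ω_l(D) = ⌊R_l(D^{1/l}) Ω(D^{1/l}) R_lᵀ(D^{-1/l})⌋`. -/
theorem expanded_ssp_matrix (l m n : ℕ) (hl : 0 < l)
    (Z X : Matrix (Fin m) (Fin n) L2) :
    sspMatrix ((Rl l m * Z * Cl' l n).map (fl l)) ((Rl l m * X * Cl' l n).map (fl l))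
      = (Rl l m * sspMatrix Z X * ((Rl l m).map rev)ᵀ).map (fl l) := by
  refine Matrix.ext fun p q => ?_
  obtain ⟨i, r⟩ := p
  obtain ⟨i', r'⟩ := q
  have hterm : ∀ (A B : Matrix (Fin m) (Fin n) L2),
      (∑ w : Fin l × Fin n,
        fl l ((Rl l m * A * Cl' l n) (i, r) w) *
          rev (fl l ((Rl l m * B * Cl' l n) (i', r') w)))
        = fl l (T ((i : ℤ) - (i' : ℤ)) * ∑ c, A r c * rev (B r' c)) := by
    intro A B
    conv_rhs => rw [Finset.mul_sum, fl_sum]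
    rw [Fintype.sum_prod_type_right]
    refine Finset.sum_congr rfl fun c _ => ?_
    have hk := key l hl ((i : ℤ)) (-(i' : ℤ)) (A r c) (rev (B r' c))
    rw [show (i : ℤ) + -(i' : ℤ) = (i : ℤ) - (i' : ℤ) by ring] at hk
    rw [← hk]
    refine Finset.sum_congr rfl fun j _ => ?_
    simp only [RAC_apply]
    rw [rev_fl]
    congr 2
    rw [rev_mul]
    have h1 : rev (T ((i' : ℤ) - (j : ℤ)) : L2) = T (-((i' : ℤ) - (j : ℤ))) :=
      invert_T _
    rw [h1]
    congr 1
    ring_nf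
  rw [Matrix.map_apply, RAR_apply, ssp_apply, ssp_apply]
  simp only [Matrix.map_apply]
  rw [hterm Z X, hterm X Z, mul_add, fl_add]
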